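/- For every integer k ≥ 2, the sequence {1/(b_k(n)·n!)}_{n=0}^∞ is log-concave, where b_k(n) are the Bell numbers of order k. -/

import Mathlib

open scoped Nat

/-- The `k`-times iterated exponential function: `expIter 0 = id`,
`expIter (k+1) x = exp (expIter k x)`. -/
noncomputable def expIter : ℕ → ℝ → ℝ
  | 0 => id
  | k + 1 => fun x => Real.exp (expIter k x)

/-- `BellB k n` is the `n`-th derivative of the `k`-times iterated exponential at `0`,
so that `expIter k x = ∑ n, BellB k n * x ^ n / n !`. -/
noncomputable def BellB (k n : ℕ) : ℝ := iteratedDeriv n (expIter k) 0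

/-- The Bell numbers of order `k`: `bellOrd k n = BellB k n / expIter k 0`. -/
noncomputable def bellOrd (k n : ℕ) : ℝ := BellB k n / expIter k 0

open scoped ENNReal

/-- Convolution powers of a coefficient sequence. -/
noncomputable def cpow (c : ℕ → ℝ≥0∞) : ℕ → ℕ → ℝ≥0∞
  | 0 => fun m => if m = 0 then 1 else 0
  | i + 1 => fun m => ∑ p ∈ Finset.range (m + 1), c p * cpow c i (m - p)

/-- Dobinski-type weights for `expIter (j+1)`. -/
noncomputable def Q : ℕ → ℕ → ℝ≥0∞
  | 0 => fun m => if m = 1 then 1 else 0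
  | j + 1 => fun m => ∑' i : ℕ, ((i)! : ℝ≥0∞)⁻¹ * cpow (Q j) i m

lemma Q_succ (j m : ℕ) : Q (j+1) m = ∑' i : ℕ, ((i)! : ℝ≥0∞)⁻¹ * cpow (Q j) i m := rfl

/-- Generating function of a coefficient sequence. -/
noncomputable def G (c : ℕ → ℝ≥0∞) (y : ℝ≥0∞) : ℝ≥0∞ := ∑' m, c m * y ^ m

lemma enn_cauchy (a b : ℕ → ℝ≥0∞) (y : ℝ≥0∞) :
    G a y * G b y = ∑' m, (∑ p ∈ Finset.range (m + 1), a p * b (m - p)) * y ^ m := by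
  unfold G
  rw [← ENNReal.tsum_mul_right]
  simp only [← ENNReal.tsum_mul_left]
  rw [← ENNReal.tsum_prod (f := fun p q => a p * y ^ p * (b q * y ^ q))]
  rw [← Finset.HasAntidiagonal.sigmaAntidiagonalEquivProd.tsum_eq (fun x : ℕ × ℕ => a x.1 * y ^ x.1 * (b x.2 * y ^ x.2))]
  rw [ENNReal.tsum_sigma']
  congr 1
  ext n
  simp only [Finset.HasAntidiagonal.sigmaAntidiagonalEquivProd_apply]
  rw [Finset.tsum_subtype (Finset.HasAntidiagonal.antidiagonal n)
    (fun x : ℕ × ℕ => a x.1 * y ^ x.1 * (b x.2 * y ^ x.2))]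
  rw [Finset.Nat.sum_antidiagonal_eq_sum_range_succ_mk, Finset.sum_mul]
  refine Finset.sum_congr rfl fun p hp => ?_
  have hpn : p ≤ n := by simpa using Finset.mem_range_succ_iff.mp hp
  have : p + (n - p) = n := Nat.add_sub_cancel' hpn
  conv_rhs => rw [← this, pow_add]
  simp only [Nat.add_sub_cancel_left]
  ring

lemma G_cpow (c : ℕ → ℝ≥0∞) (y : ℝ≥0∞) : ∀ i, G (cpow c i) y = (G c y) ^ i
  | 0 => by
    simp only [pow_zero, G, cpow]
    rw [tsum_eq_single 0 (by intro m hm; simp [hm])]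
    simp
  | i + 1 => by
    rw [pow_succ, mul_comm ((G c y)^i), ← G_cpow c y i, enn_cauchy]
    rfl

lemma expIter_pos (j : ℕ) (x : ℝ) : 0 < expIter (j + 1) x := Real.exp_pos _

lemma G_Q (j : ℕ) (x : ℝ) :
    G (Q j) (ENNReal.ofReal (Real.exp x)) = ENNReal.ofReal (expIter (j + 1) x) := by
  induction j generalizing x with
  | zero =>
    unfold G Q
    rw [tsum_eq_single 1 (by intro m hm; simp [hm])]
    simp [expIter]
  | succ j ih =>
    have hsum : Summable (fun i : ℕ => (expIter (j + 1) x) ^ i / (i)!) :=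
      Real.summable_pow_div_factorial _
    have hnn : ∀ i : ℕ, 0 ≤ (expIter (j + 1) x) ^ i / (i)! := fun i =>
      div_nonneg (pow_nonneg (expIter_pos j x).le _) (by positivity)
    have hexp : expIter (j + 2) x = ∑' i : ℕ, (expIter (j + 1) x) ^ i / (i)! := by
      show Real.exp (expIter (j+1) x) = _
      rw [Real.exp_eq_exp_ℝ, NormedSpace.exp_eq_tsum_div]
    calc G (Q (j + 1)) (ENNReal.ofReal (Real.exp x))
        = ∑' m, ∑' i : ℕ, ((i)! : ℝ≥0∞)⁻¹ * cpow (Q j) i m * (ENNReal.ofReal (Real.exp x)) ^ m := by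
          unfold G
          congr 1; ext m
          rw [Q_succ, ENNReal.tsum_mul_right]
      _ = ∑' i : ℕ, ((i)! : ℝ≥0∞)⁻¹ * G (cpow (Q j) i) (ENNReal.ofReal (Real.exp x)) := by
          rw [ENNReal.tsum_comm]
          congr 1; ext i
          unfold G
          rw [← ENNReal.tsum_mul_left]
          congr 1; ext m; ring
      _ = ∑' i : ℕ, ((i)! : ℝ≥0∞)⁻¹ * (ENNReal.ofReal (expIter (j + 1) x)) ^ i := by
          congr 1; ext i; rw [G_cpow, ih]
      _ = ∑' i : ℕ, ENNReal.ofReal ((expIter (j + 1) x) ^ i / (i)!) := by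
          congr 1; ext i
          rw [← ENNReal.ofReal_pow (expIter_pos j x).le, div_eq_inv_mul, ENNReal.ofReal_mul (by positivity)]
          congr 1
          rw [ENNReal.ofReal_inv_of_pos (by positivity), ENNReal.ofReal_natCast]
      _ = ENNReal.ofReal (expIter (j + 2) x) := by
          rw [hexp, ENNReal.ofReal_tsum_of_nonneg hnn hsum]

lemma tsum_Q_exp (j : ℕ) (x : ℝ) :
    ∑' m : ℕ, Q j m * ENNReal.ofReal (Real.exp (m * x)) = ENNReal.ofReal (expIter (j + 1) x) := by
  rw [← G_Q j x]
  unfold G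
  congr 1; ext m
  rw [Real.exp_nat_mul, ENNReal.ofReal_pow (Real.exp_nonneg x)]

lemma Q_ne_top (j m : ℕ) : Q j m ≠ ∞ := by
  have h := tsum_Q_exp j 0
  have hle : Q j m * ENNReal.ofReal (Real.exp (m * 0)) ≤ ENNReal.ofReal (expIter (j + 1) 0) := by
    rw [← h]; exact ENNReal.le_tsum m
  simp only [mul_zero, Real.exp_zero, ENNReal.ofReal_one, mul_one] at hle
  exact ne_top_of_le_ne_top ENNReal.ofReal_ne_top hle

/-- The (real) Dobinski-type weights for `expIter (j+1)`. -/
noncomputable def w (j m : ℕ) : ℝ := (Q j m).toReal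

lemma w_nonneg (j m : ℕ) : 0 ≤ w j m := ENNReal.toReal_nonneg

lemma tsum_Q_pow_exp_le (j n : ℕ) (x : ℝ) :
    ∑' m : ℕ, Q j m * ENNReal.ofReal ((m : ℝ) ^ n * Real.exp (m * x)) ≠ ∞ := by
  have key : ∀ m : ℕ, (m : ℝ) ^ n * Real.exp (m * x) ≤ (n)! * Real.exp (m * (x + 1)) := by
    intro m
    have h1 : (m : ℝ) ^ n / (n)! ≤ Real.exp m := by
      calc (m : ℝ) ^ n / (n)! ≤ ∑ i ∈ Finset.range (n + 1), (m : ℝ) ^ i / (i)! := by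
            exact Finset.single_le_sum (f := fun i => (m : ℝ) ^ i / (i)!)
              (fun i _ => by positivity) (Finset.self_mem_range_succ n)
        _ ≤ Real.exp m := Real.sum_le_exp_of_nonneg (by positivity) _
    have h2 : (m : ℝ) ^ n ≤ (n)! * Real.exp m := by
      rw [div_le_iff₀ (by positivity)] at h1; linarith [h1]
    calc (m : ℝ) ^ n * Real.exp (m * x) ≤ ((n)! * Real.exp m) * Real.exp (m * x) := by
          apply mul_le_mul_of_nonneg_right h2 (Real.exp_nonneg _)
      _ = (n)! * Real.exp (m * (x + 1)) := by
          rw [mul_assoc, ← Real.exp_add]; ring_nf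
  have hle : ∑' m : ℕ, Q j m * ENNReal.ofReal ((m : ℝ) ^ n * Real.exp (m * x)) ≤
      ENNReal.ofReal ((n)!) * ENNReal.ofReal (expIter (j + 1) (x + 1)) := by
    rw [← tsum_Q_exp j (x + 1), ← ENNReal.tsum_mul_left]
    refine ENNReal.tsum_le_tsum fun m => ?_
    rw [← mul_assoc, mul_comm (ENNReal.ofReal ((n)!)) (Q j m), mul_assoc]
    refine mul_le_mul_right ?_ _
    rw [← ENNReal.ofReal_mul (by positivity)]
    exact ENNReal.ofReal_le_ofReal (key m)
  exact ne_top_of_le_ne_top (by finiteness) hle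

lemma summable_w (j n : ℕ) (x : ℝ) :
    Summable (fun m : ℕ => w j m * (m : ℝ) ^ n * Real.exp (m * x)) := by
  have := ENNReal.summable_toReal (tsum_Q_pow_exp_le j n x)
  convert this using 2 with m
  rw [ENNReal.toReal_mul, ENNReal.toReal_ofReal (by positivity)]
  unfold w; ring

lemma tsum_w_eq (j : ℕ) (x : ℝ) :
    ∑' m : ℕ, w j m * Real.exp (m * x) = expIter (j + 1) x := by
  have h := tsum_Q_exp j x
  have := congrArg ENNReal.toReal h
  rw [ENNReal.tsum_toReal_eq (fun m => by
      exact ENNReal.mul_ne_top (Q_ne_top j m) ENNReal.ofReal_ne_top)] at this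
  rw [ENNReal.toReal_ofReal (expIter_pos j x).le] at this
  rw [← this]
  congr 1; ext m
  rw [ENNReal.toReal_mul, ENNReal.toReal_ofReal (Real.exp_nonneg _)]
  rfl

/-- `gg j n x = (d/dx)^n expIter (j+1) x`, as an explicit series. -/
noncomputable def gg (j n : ℕ) (x : ℝ) : ℝ := ∑' m : ℕ, w j m * (m : ℝ) ^ n * Real.exp (m * x)

lemma hasDerivAt_gg (j n : ℕ) (x : ℝ) : HasDerivAt (gg j n) (gg j (n + 1) x) x := by
  have key : HasDerivAt (fun z => ∑' m : ℕ, w j m * (m : ℝ) ^ n * Real.exp (m * z))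
      (∑' m : ℕ, w j m * (m : ℝ) ^ (n + 1) * Real.exp (m * x)) x := by
    refine hasDerivAt_tsum_of_isPreconnected
      (u := fun m : ℕ => w j m * (m : ℝ) ^ (n + 1) * Real.exp (m * (x + 1)))
      (g := fun m z => w j m * (m : ℝ) ^ n * Real.exp (m * z))
      (g' := fun m z => w j m * (m : ℝ) ^ (n + 1) * Real.exp (m * z))
      (summable_w j (n + 1) (x + 1)) (isOpen_Ioo (a := x - 1) (b := x + 1))
      (isPreconnected_Ioo) (fun m y _ => ?_) (fun m y hy => ?_) ?_ (summable_w j n x) ?_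
    · have h1 : HasDerivAt (fun z : ℝ => (m : ℝ) * z) m y := by
        simpa using (hasDerivAt_id y).const_mul (m : ℝ)
      have h2 : HasDerivAt (fun z : ℝ => Real.exp ((m : ℝ) * z)) (Real.exp ((m : ℝ) * y) * m) y :=
        (Real.hasDerivAt_exp ((m : ℝ) * y)).comp y h1
      have h3 := h2.const_mul (w j m * (m : ℝ) ^ n)
      convert h3 using 1
      show w j m * (m:ℝ) ^ (n+1) * Real.exp ((m:ℝ) * y) = _
      rw [pow_succ]; ring
      rfl
    · rw [Real.norm_eq_abs, abs_of_nonneg (mul_nonneg (mul_nonneg (w_nonneg j m)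
        (by positivity)) (Real.exp_nonneg _))]
      have : Real.exp ((m : ℝ) * y) ≤ Real.exp ((m : ℝ) * (x + 1)) := by
        apply Real.exp_le_exp.mpr
        exact mul_le_mul_of_nonneg_left hy.2.le (Nat.cast_nonneg m)
      exact mul_le_mul_of_nonneg_left this (mul_nonneg (w_nonneg j m) (by positivity))
    · exact ⟨by linarith, by linarith⟩
    · exact ⟨by linarith, by linarith⟩
  exact key

lemma iteratedDeriv_gg (j n : ℕ) : iteratedDeriv n (gg j 0) = gg j n := by
  induction n with
  | zero => simp [iteratedDeriv_zero]
  | succ n ih =>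
    rw [iteratedDeriv_succ, ih]
    funext x
    exact (hasDerivAt_gg j n x).deriv

lemma expIter_eq_gg (j : ℕ) : expIter (j + 1) = gg j 0 := by
  funext x
  rw [← tsum_w_eq j x]
  unfold gg
  congr 1; ext m; ring

lemma BellB_eq_tsum (j n : ℕ) : BellB (j + 1) n = ∑' m : ℕ, w j m * (m : ℝ) ^ n := by
  unfold BellB
  rw [expIter_eq_gg j, iteratedDeriv_gg j n]
  unfold gg
  congr 1; ext m
  simp

lemma Q_one_pos (j : ℕ) : 0 < Q j 1 := by
  induction j with
  | zero => simp [Q]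
  | succ j ih =>
    have h1 : ((1)! : ℝ≥0∞)⁻¹ * cpow (Q j) 1 1 ≤ Q (j + 1) 1 := by
      rw [Q_succ]; exact ENNReal.le_tsum 1
    have h2 : cpow (Q j) 1 1 = Q j 1 := by
      show ∑ p ∈ Finset.range 2, Q j p * cpow (Q j) 0 (1 - p) = Q j 1
      rw [Finset.sum_range_succ, Finset.sum_range_one]
      simp [cpow]
    rw [h2] at h1
    simpa using lt_of_lt_of_le (by simpa using ih) h1

lemma w_one_pos (j : ℕ) : 0 < w j 1 :=
  ENNReal.toReal_pos (Q_one_pos j).ne' (Q_ne_top j 1)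

lemma summable_w0 (j n : ℕ) : Summable (fun m : ℕ => w j m * (m : ℝ) ^ n) := by
  have := summable_w j n 0
  simpa using this

lemma BellB_pos (j n : ℕ) : 0 < BellB (j + 1) n := by
  rw [BellB_eq_tsum]
  calc (0 : ℝ) < w j 1 * (1 : ℕ) ^ n := by simpa using w_one_pos j
    _ ≤ ∑' m : ℕ, w j m * (m : ℝ) ^ n := by
        refine Summable.le_tsum (summable_w0 j n) 1 fun m _ => ?_
        have := w_nonneg j m
        positivity

lemma BellB_sq_le (j n : ℕ) :
    BellB (j + 1) (n + 1) ^ 2 ≤ BellB (j + 1) n * BellB (j + 1) (n + 2) := by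
  simp only [BellB_eq_tsum]
  set F : ℕ → ℝ := fun m => Real.sqrt (w j m * (m : ℝ) ^ n)
  set G : ℕ → ℝ := fun m => Real.sqrt (w j m * (m : ℝ) ^ (n + 2))
  have hFG : ∀ m : ℕ, F m * G m = w j m * (m : ℝ) ^ (n + 1) := by
    intro m
    have hw := w_nonneg j m
    rw [show F m * G m = Real.sqrt ((w j m * (m:ℝ)^n) * (w j m * (m:ℝ)^(n+2))) by
      rw [Real.sqrt_mul (by positivity)]]
    have : (w j m * (m:ℝ)^n) * (w j m * (m:ℝ)^(n+2)) = (w j m * (m:ℝ)^(n+1))^2 := by ring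
    rw [this, Real.sqrt_sq (by positivity)]
  have hF2 : ∀ m : ℕ, F m ^ 2 = w j m * (m : ℝ) ^ n := fun m =>
    Real.sq_sqrt (by have := w_nonneg j m; positivity)
  have hG2 : ∀ m : ℕ, G m ^ 2 = w j m * (m : ℝ) ^ (n + 2) := fun m =>
    Real.sq_sqrt (by have := w_nonneg j m; positivity)
  have key : ∀ N : ℕ,
      (∑ m ∈ Finset.range N, w j m * (m : ℝ) ^ (n + 1)) ^ 2 ≤
        (∑' m : ℕ, w j m * (m : ℝ) ^ n) * (∑' m : ℕ, w j m * (m : ℝ) ^ (n + 2)) := by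
    intro N
    calc (∑ m ∈ Finset.range N, w j m * (m : ℝ) ^ (n + 1)) ^ 2
        = (∑ m ∈ Finset.range N, F m * G m) ^ 2 := by
          congr 1; exact (Finset.sum_congr rfl fun m _ => (hFG m).symm)
      _ ≤ (∑ m ∈ Finset.range N, F m ^ 2) * (∑ m ∈ Finset.range N, G m ^ 2) :=
          Finset.sum_mul_sq_le_sq_mul_sq _ _ _
      _ ≤ (∑' m : ℕ, w j m * (m : ℝ) ^ n) * (∑' m : ℕ, w j m * (m : ℝ) ^ (n + 2)) := by
          apply mul_le_mul
          · rw [show (∑ m ∈ Finset.range N, F m ^ 2) = ∑ m ∈ Finset.range N, w j m * (m:ℝ)^n from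
              Finset.sum_congr rfl fun m _ => hF2 m]
            exact Summable.sum_le_tsum _ (fun m _ => by have := w_nonneg j m; positivity) (summable_w0 j n)
          · rw [show (∑ m ∈ Finset.range N, G m ^ 2) = ∑ m ∈ Finset.range N, w j m * (m:ℝ)^(n+2) from
              Finset.sum_congr rfl fun m _ => hG2 m]
            exact Summable.sum_le_tsum _ (fun m _ => by have := w_nonneg j m; positivity) (summable_w0 j (n+2))
          · positivity
          · exact tsum_nonneg fun m => by have := w_nonneg j m; positivity
  have htend : Filter.Tendsto
      (fun N => (∑ m ∈ Finset.range N, w j m * (m : ℝ) ^ (n + 1)) ^ 2) Filter.atTop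
      (nhds ((∑' m : ℕ, w j m * (m : ℝ) ^ (n + 1)) ^ 2)) :=
    ((summable_w0 j (n + 1)).hasSum.tendsto_sum_nat).pow 2
  exact le_of_tendsto' htend key

/-- For every integer `k ≥ 2`, the sequence `1 / (bellOrd k n * n !)` is log-concave. -/
theorem inv_bellOrd_factorial_log_concave (k : ℕ) (hk : 2 ≤ k) (n : ℕ) :
    (1 / (bellOrd k n * (n ! : ℝ))) * (1 / (bellOrd k (n + 2) * ((n + 2)! : ℝ))) ≤
      (1 / (bellOrd k (n + 1) * ((n + 1)! : ℝ))) ^ 2 := by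
  obtain ⟨j, rfl⟩ : ∃ j, k = j + 1 := ⟨k - 1, by omega⟩
  have hc : 0 < expIter (j + 1) 0 := expIter_pos j 0
  have hb : ∀ m : ℕ, 0 < bellOrd (j + 1) m := fun m => div_pos (BellB_pos j m) hc
  have hBsq := BellB_sq_le j n
  have hbsq : bellOrd (j + 1) (n + 1) ^ 2 ≤ bellOrd (j + 1) n * bellOrd (j + 1) (n + 2) := by
    unfold bellOrd
    rw [div_pow, div_mul_div_comm, show expIter (j+1) 0 * expIter (j+1) 0 = expIter (j+1) 0 ^ 2 from (sq _).symm]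
    gcongr
  have hfactn : (((n+1)!)^2 : ℕ) ≤ n ! * (n+2)! := by
    rw [pow_two, Nat.factorial_succ (n+1), Nat.factorial_succ n]
    nlinarith [n.factorial_pos]
  have hfact : (((n+1)! : ℝ))^2 ≤ (n ! : ℝ) * ((n+2)! : ℝ) := by
    have := (Nat.cast_le (α := ℝ)).mpr hfactn
    push_cast at this
    convert this using 1
  have hb1 := hb n; have hb2 := hb (n+1); have hb3 := hb (n+2)
  have hXpos : (0:ℝ) < bellOrd (j+1) n * (n ! : ℝ) * (bellOrd (j+1) (n+2) * ((n+2)! : ℝ)) := by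
    have h1 : (0:ℝ) < (n ! : ℝ) := by exact_mod_cast n.factorial_pos
    have h2 : (0:ℝ) < ((n+2)! : ℝ) := by exact_mod_cast (n+2).factorial_pos
    positivity
  rw [div_mul_div_comm, one_mul, div_pow, one_pow, one_div_le_one_div hXpos (by positivity)]
  calc (bellOrd (j+1) (n+1) * ((n+1)! : ℝ))^2
      = bellOrd (j+1) (n+1) ^ 2 * ((n+1)! : ℝ)^2 := by ring
    _ ≤ (bellOrd (j+1) n * bellOrd (j+1) (n+2)) * ((n ! : ℝ) * ((n+2)! : ℝ)) := by
        apply mul_le_mul hbsq hfact (by positivity) (by positivity)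
    _ = bellOrd (j+1) n * (n ! : ℝ) * (bellOrd (j+1) (n+2) * ((n+2)! : ℝ)) := by ring
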